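/- Fix integers n ≥ 1 and N ≥ 1. Consider a sequence of N 'chances' processed by agents n, n-1, …, 1 as follows: each item gives a chance first to agent n; an agent k with its own counter takes the item when its counter (incremented by 1 at each chance it receives) reaches k, in which case the counter resets to 0 and subsequent agents get no chance for that item; otherwise the chance passes to agent k-1; agent 1 always takes an item when it receives a chance. Then for each k ∈ {1, …, n}, the number of items taken by agent k is at least N/n - 1. -/

import Mathlib

/-- One chance: the counters `c`, offered to agents `k, k-1, …, 1` in turn.
Returns the agent who takes the item and the updated counters. -/
def passStep : (ℕ → ℕ) → ℕ → ℕ × (ℕ → ℕ)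
  | c, 0 => (0, c)
  | c, (k + 1) =>
    let c' := Function.update c (k + 1) (c (k + 1) + 1)
    if c' (k + 1) = k + 1 then (k + 1, Function.update c' (k + 1) 0)
    else passStep c' k

/-- Process `N` items with `n` agents; returns (number of items taken by each agent,
final counters). Each item gives the first chance to agent `n`. -/
def runChances (n : ℕ) : ℕ → ((ℕ → ℕ) × (ℕ → ℕ))
  | 0 => (fun _ => 0, fun _ => 0)
  | (N + 1) =>
    let r := runChances n N
    let s := passStep r.2 n
    (Function.update r.1 s.1 (r.1 s.1 + 1), s.2)

lemma passStep_spec (k : ℕ) (c : ℕ → ℕ) (h : ∀ j, 1 ≤ j → j ≤ k → c j < j) :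
    (passStep c k).1 ≤ k ∧
    (1 ≤ k → 1 ≤ (passStep c k).1) ∧
    (∀ j, (j < (passStep c k).1 ∨ k < j) → (passStep c k).2 j = c j) ∧
    (∀ j, (passStep c k).1 < j → j ≤ k → (passStep c k).2 j = c j + 1 ∧ c j + 1 < j) ∧
    (1 ≤ (passStep c k).1 →
      (passStep c k).2 (passStep c k).1 = 0 ∧ c (passStep c k).1 + 1 = (passStep c k).1) := by
  induction k generalizing c with
  | zero =>
    simp [passStep]
    omega
  | succ k ih =>
    by_cases hc : c (k + 1) + 1 = k + 1
    · have hps : passStep c (k + 1) =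
        (k + 1, Function.update (Function.update c (k + 1) (c (k + 1) + 1)) (k + 1) 0) := by
        simp [passStep, hc]
      rw [hps]
      refine ⟨le_refl _, fun _ => by omega, ?_, ?_, ?_⟩
      · intro j hj
        have : j ≠ k + 1 := by omega
        simp [Function.update_of_ne this]
      · intro j h1 h2; omega
      · intro _; simp [hc]
    · -- else branch
      have hps : passStep c (k + 1) = passStep (Function.update c (k + 1) (c (k + 1) + 1)) k := by
        simp [passStep]
        intro hcc
        exact absurd (by simpa using hcc) hc
      have hk1 : 1 ≤ k := by
        rcases Nat.eq_zero_or_pos k with rfl | h'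
        · exfalso
          have h1 := h 1 le_rfl (by omega)
          simp only [Nat.zero_add] at hc
          omega
        · exact h'
      have h1 : ∀ j, 1 ≤ j → j ≤ k → Function.update c (k + 1) (c (k + 1) + 1) j < j := by
        intro j hj hjk
        rw [Function.update_of_ne (by omega)]
        exact h j hj (by omega)
      obtain ⟨w_le, w_pos, heq, hinc, htake⟩ := ih _ h1
      rw [hps]
      refine ⟨by omega, fun _ => w_pos hk1, ?_, ?_, ?_⟩
      · intro j hj
        rcases hj with hj | hj
        · rw [heq j (Or.inl hj), Function.update_of_ne (by omega)]
        · rw [heq j (Or.inr (by omega)), Function.update_of_ne (by omega)]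
      · intro j hwj hjk
        by_cases hjk1 : j = k + 1
        · subst hjk1
          rw [heq (k+1) (Or.inr (by omega)), Function.update_self]
          have := h (k+1) (by omega) le_rfl
          omega
        · obtain ⟨e1, e2⟩ := hinc j hwj (by omega)
          rw [Function.update_of_ne hjk1] at e1 e2
          exact ⟨e1, e2⟩
      · intro hw
        obtain ⟨e1, e2⟩ := htake hw
        rw [Function.update_of_ne (by omega)] at e2
        exact ⟨e1, e2⟩

lemma run_inv (n : ℕ) (hn : 1 ≤ n) (N : ℕ) :
    (∀ j, 1 ≤ j → (runChances n N).2 j < j) ∧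
    (∀ j, 1 ≤ j → j ≤ n →
      j * (runChances n N).1 j + (runChances n N).2 j
        + (∑ i ∈ Finset.Ioc j n, (runChances n N).1 i) = N) := by
  induction N with
  | zero => simp [runChances]; omega
  | succ N ih =>
    obtain ⟨ihc, ihch⟩ := ih
    have hspec := passStep_spec n (runChances n N).2 (fun j hj _ => ihc j hj)
    obtain ⟨w_le, w_pos, heq, hinc, htake⟩ := hspec
    set r := runChances n N with hr
    set w := (passStep r.2 n).1 with hw
    have hw1 : 1 ≤ w := w_pos hn
    have hrun : runChances n (N + 1) =
        (Function.update r.1 w (r.1 w + 1), (passStep r.2 n).2) := by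
      simp [runChances]
      exact ⟨rfl, rfl⟩
    rw [hrun]
    constructor
    · intro j hj
      simp only
      rcases lt_trichotomy j w with h1 | h1 | h1
      · rw [heq j (Or.inl h1)]; exact ihc j hj
      · subst h1; rw [(htake hw1).1]; omega
      · by_cases h2 : j ≤ n
        · have := hinc j h1 h2
          omega
        · rw [heq j (Or.inr (by omega))]; exact ihc j hj
    · intro j hj hjn
      simp only
      have hsum_old := ihch j hj hjn
      rcases lt_trichotomy j w with h1 | h1 | h1
      · -- j < w : counter unchanged, takes j unchanged, sum increases by 1
        rw [heq j (Or.inl h1)]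
        rw [Function.update_of_ne (by omega)]
        have hmem : w ∈ Finset.Ioc j n := Finset.mem_Ioc.mpr ⟨h1, w_le⟩
        rw [Finset.sum_update_of_mem hmem]
        have hsplit := Finset.sum_eq_sum_sdiff_singleton_add hmem r.1
        generalize j * r.1 j = P at hsum_old ⊢
        omega
      · -- j = w
        subst h1
        rw [(htake hw1).1, Function.update_self]
        have hnot : w ∉ Finset.Ioc w n := by simp
        rw [Finset.sum_update_of_notMem hnot]
        have hcw := (htake hw1).2
        rw [Nat.mul_add, Nat.mul_one]
        generalize w * r.1 w = P at hsum_old ⊢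
        omega
      · -- j > w : counter +1, takes unchanged, sum unchanged
        rw [(hinc j h1 hjn).1]
        rw [Function.update_of_ne (by omega)]
        have hnot : w ∉ Finset.Ioc j n := by simp; omega
        rw [Finset.sum_update_of_notMem hnot]
        generalize j * r.1 j = P at hsum_old ⊢
        omega

theorem stmt_8 (n N : ℕ) (hn : 1 ≤ n) (hN : 1 ≤ N) (k : ℕ) (hk1 : 1 ≤ k) (hkn : k ≤ n) :
    (N : ℝ) / n - 1 ≤ ((runChances n N).1 k : ℝ) := by
  obtain ⟨hc, hch⟩ := run_inv n hn N
  set t := (runChances n N).1 with ht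
  set c := (runChances n N).2 with hcdef
  set ch : ℕ → ℕ := fun j => j * t j + c j with hchdef
  -- step relation: ch j + t (j+1) = ch (j+1) for 1 ≤ j < n
  have hstep : ∀ j, 1 ≤ j → j + 1 ≤ n → ch j + t (j + 1) = ch (j + 1) := by
    intro j hj hjn
    have e1 := hch j hj (by omega)
    have e2 := hch (j + 1) (by omega) hjn
    have hmem : j + 1 ∈ Finset.Ioc j n := Finset.mem_Ioc.mpr ⟨by omega, hjn⟩
    have hdiff : Finset.Ioc j n \ {j + 1} = Finset.Ioc (j + 1) n := by
      ext x; simp [Finset.mem_Ioc]; omega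
    have hsplit : ∑ i ∈ Finset.Ioc j n, t i
        = t (j + 1) + ∑ i ∈ Finset.Ioc (j + 1) n, t i := by
      rw [Finset.sum_eq_sum_sdiff_singleton_add hmem, hdiff, Nat.add_comm]
    simp only [hchdef]
    omega
  have hchn : ch n = N := by
    have := hch n hn le_rfl
    simpa [hchdef] using this
  -- chain: n * ch j ≥ j * N  for 1 ≤ j ≤ n, by downward induction on n - j
  have chain : ∀ d j, j + d = n → 1 ≤ j → j * N ≤ n * ch j := by
    intro d
    induction d with
    | zero => intro j hj _; rw [show j = n by omega, hchn]
    | succ d ihd =>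
      intro j hjd hj
      have hjn : j + 1 ≤ n := by omega
      have ih := ihd (j + 1) (by omega) (by omega)
      have hs := hstep j hj hjn
      have htle : (j + 1) * t (j + 1) ≤ ch (j + 1) := by
        simp only [hchdef]; omega
      -- (j+1) * ch j ≥ j * ch(j+1)
      have key : j * ch (j + 1) ≤ (j + 1) * ch j := by
        nlinarith [hs, htle]
      have : (j + 1) * (j * N) ≤ (j + 1) * (n * ch j) := by
        calc (j + 1) * (j * N) = j * ((j + 1) * N) := by ring
        _ ≤ j * (n * ch (j + 1)) := Nat.mul_le_mul_left _ ih
        _ = n * (j * ch (j + 1)) := by ring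
        _ ≤ n * ((j + 1) * ch j) := Nat.mul_le_mul_left _ key
        _ = (j + 1) * (n * ch j) := by ring
      exact Nat.le_of_mul_le_mul_left this (by omega)
  have hk := chain (n - k) k (by omega) hk1
  have hck : c k < k := hc k hk1
  -- n * ch k = n*k*t k + n*c k ≤ n*k*t k + n*(k-1) ⇒ k*N + n ≤ n*k*(t k + 1)
  have h2 : k * N < k * (n * (t k + 1)) := by
    have : n * ch k = n * (k * t k) + n * c k := by simp only [hchdef]; ring
    nlinarith [hk, hck, hn]
  have h3 : N < n * (t k + 1) := lt_of_mul_lt_mul_left h2 (Nat.zero_le k)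
  have h3' : (N : ℝ) ≤ n * (t k + 1) := by exact_mod_cast h3.le
  have hnpos : (0 : ℝ) < n := by exact_mod_cast hn
  rw [sub_le_iff_le_add, div_le_iff₀ hnpos]
  have : (N : ℝ) ≤ (n : ℝ) * ((t k : ℝ) + 1) := by exact_mod_cast h3.le
  nlinarith [this]
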